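/- Let J = Σ_m π m · s m · t m − β · D(π‖q), L_succ = Σ_m π₁ m · t m − β · D(π₁‖q), and L_fail = −β · D(π₀‖q). Then J = P₁ · L_succ + P₀ · L_fail + β · I(X;R). (This is the information-theoretic decomposition of the TAMTRL objective: the objective equals the success-probability-weighted success-conditional term, plus the failure-probability-weighted failure-conditional regularization term, plus β times the memory–reward mutual information.) -/

import Mathlib

open Finset

/-- Information-theoretic decomposition of the TAMTRL objective:
`J = P₁ * L_succ + P₀ * L_fail + β * I(X;R)`, where
`J = Σ_m π m * s m * t m − β * D(π‖q)`,
`L_succ = Σ_m π₁ m * t m − β * D(π₁‖q)`, and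
`L_fail = −β * D(π₀‖q)`. -/
theorem tamtrl_objective_decomposition
    {M : Type*} [Fintype M] [Nonempty M]
    (p q s t : M → ℝ) (β : ℝ)
    (hp_pos : ∀ m, 0 < p m) (hp_sum : ∑ m, p m = 1)
    (hq_pos : ∀ m, 0 < q m) (hq_sum : ∑ m, q m = 1)
    (hs : ∀ m, 0 < s m ∧ s m < 1)
    (P₁ P₀ : ℝ)
    (hP₁ : P₁ = ∑ m, p m * s m)
    (hP₀ : P₀ = 1 - P₁)
    (p₁ p₀ : M → ℝ)
    (hp₁ : ∀ m, p₁ m = p m * s m / P₁)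
    (hp₀ : ∀ m, p₀ m = p m * (1 - s m) / P₀)
    (I : ℝ)
    (hI : I = ∑ m, (p m * s m * Real.log (s m / P₁)
        + p m * (1 - s m) * Real.log ((1 - s m) / P₀)))
    (J Lsucc Lfail : ℝ)
    (hJ : J = (∑ m, p m * s m * t m) - β * ∑ m, p m * Real.log (p m / q m))
    (hLsucc : Lsucc = (∑ m, p₁ m * t m) - β * ∑ m, p₁ m * Real.log (p₁ m / q m))
    (hLfail : Lfail = -β * ∑ m, p₀ m * Real.log (p₀ m / q m)) :
    J = P₁ * Lsucc + P₀ * Lfail + β * I := by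
  have hP₁pos : 0 < P₁ := by
    rw [hP₁]
    exact Finset.sum_pos (fun m _ => mul_pos (hp_pos m) (hs m).1) Finset.univ_nonempty
  have hP₀pos : 0 < P₀ := by
    rw [hP₀, sub_pos, hP₁, ← hp_sum]
    exact Finset.sum_lt_sum_of_nonempty Finset.univ_nonempty
      (fun m _ => by nlinarith [(hs m).2, hp_pos m])
  -- pointwise identities
  have ht : ∀ m, P₁ * (p₁ m * t m) = p m * s m * t m := by
    intro m; rw [hp₁]; field_simp
  have hlog : ∀ m : M,
      P₁ * (p₁ m * Real.log (p₁ m / q m)) + P₀ * (p₀ m * Real.log (p₀ m / q m))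
        - (p m * s m * Real.log (s m / P₁) + p m * (1 - s m) * Real.log ((1 - s m) / P₀))
      = p m * Real.log (p m / q m) := by
    intro m
    have hs1 := (hs m).1
    have hs2 := (hs m).2
    have hpm := hp_pos m
    have hqm := hq_pos m
    have e1 : p₁ m / q m = (p m / q m) * (s m / P₁) := by
      rw [hp₁]; field_simp
    have e0 : p₀ m / q m = (p m / q m) * ((1 - s m) / P₀) := by
      rw [hp₀, div_div, div_mul_div_comm, mul_comm P₀ (q m)]
    have l1 : Real.log (p₁ m / q m) = Real.log (p m / q m) + Real.log (s m / P₁) := by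
      rw [e1, Real.log_mul (by positivity) (by positivity)]
    have l0 : Real.log (p₀ m / q m) = Real.log (p m / q m) + Real.log ((1 - s m) / P₀) := by
      rw [e0, Real.log_mul (by positivity) (ne_of_gt (div_pos (by linarith) hP₀pos))]
    have c1 : P₁ * p₁ m = p m * s m := by rw [hp₁]; field_simp
    have c0 : P₀ * p₀ m = p m * (1 - s m) := by rw [hp₀]; field_simp
    calc P₁ * (p₁ m * Real.log (p₁ m / q m)) + P₀ * (p₀ m * Real.log (p₀ m / q m))
          - (p m * s m * Real.log (s m / P₁) + p m * (1 - s m) * Real.log ((1 - s m) / P₀))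
        = (P₁ * p₁ m) * (Real.log (p m / q m) + Real.log (s m / P₁))
          + (P₀ * p₀ m) * (Real.log (p m / q m) + Real.log ((1 - s m) / P₀))
          - (p m * s m * Real.log (s m / P₁) + p m * (1 - s m) * Real.log ((1 - s m) / P₀)) := by
          rw [l1, l0]; ring
      _ = p m * Real.log (p m / q m) := by rw [c1, c0]; ring
  have hsum1 : P₁ * ∑ m, p₁ m * t m = ∑ m, p m * s m * t m := by
    rw [Finset.mul_sum]; exact Finset.sum_congr rfl fun m _ => ht m
  have hsum2 : P₁ * (∑ m, p₁ m * Real.log (p₁ m / q m))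
      + P₀ * (∑ m, p₀ m * Real.log (p₀ m / q m)) - I
      = ∑ m, p m * Real.log (p m / q m) := by
    rw [hI, Finset.mul_sum, Finset.mul_sum, ← Finset.sum_add_distrib, ← Finset.sum_sub_distrib]
    exact Finset.sum_congr rfl fun m _ => hlog m
  rw [hJ, hLsucc, hLfail, ← hsum1, ← hsum2]
  ring
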